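/- Let θ, ℓ, r be integers with ℓ < θ < r and min(θ−ℓ, r−θ) ≥ (r−ℓ)/4 (well-separated change point), and let f be the step function equal to 0 on (ℓ,θ] and d on (θ,r]. Then for any integer b with |b − θ| ≤ min(θ−ℓ, r−θ)/2, the CUSUM of f satisfies |F_{ℓ,θ,r} − F_{ℓ,b,r}| ≥ (2/(3√6)) · |d| · |b − θ| / √(min(θ−ℓ, r−θ)). -/

import Mathlib

open Finset

/-- CUSUM statistic of a sequence over `(s, e]` at split point `b`. -/
noncomputable def cusum (f : ℕ → ℝ) (s b e : ℕ) : ℝ :=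
  Real.sqrt (((b : ℝ) - s) * ((e : ℝ) - b) / ((e : ℝ) - s)) *
    ((∑ t ∈ Finset.Icc (s + 1) b, f t) / ((b : ℝ) - s) -
      (∑ t ∈ Finset.Icc (b + 1) e, f t) / ((e : ℝ) - b))

/-- For a well-separated single change point `θ` in `(ℓ, r)` with jump size `d`,
and any split `b` with `|b - θ| ≤ min(θ-ℓ, r-θ)/2`, the CUSUMs satisfy
`|F_{ℓ,θ,r} - F_{ℓ,b,r}| ≥ (2/(3√6))·|d|·|b-θ|/√(min(θ-ℓ, r-θ))`. -/

lemma cusum_key (P Q H : ℝ) (hP : 0 < P) (hQ : 0 < Q) (hH : 0 ≤ H) (hHP : H < P)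
    (hH2 : H ≤ min P Q / 2) :
    2 / (3 * Real.sqrt 6) * H / Real.sqrt (min P Q) ≤
      Real.sqrt (P * Q / (P + Q)) -
        Q / (Q + H) * Real.sqrt ((P - H) * (Q + H) / (P + Q)) := by
  have hm : 0 < min P Q := lt_min hP hQ
  have hN : 0 < P + Q := by linarith
  have hQH : 0 < Q + H := by linarith
  have hB : 0 < P - H := by linarith
  have hHQ : H ≤ Q / 2 := le_trans hH2 (by have := min_le_right P Q; linarith)
  set s1 := Real.sqrt (P * Q / (P + Q)) with hs1def
  set s2 := Q / (Q + H) * Real.sqrt ((P - H) * (Q + H) / (P + Q)) with hs2def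
  have hs1pos : 0 < s1 := Real.sqrt_pos.2 (by positivity)
  have hs2nonneg : 0 ≤ s2 := by positivity
  have hs1sq : s1 ^ 2 = P * Q / (P + Q) := Real.sq_sqrt (by positivity)
  have hsq2 : (Real.sqrt ((P - H) * (Q + H) / (P + Q))) ^ 2 = (P - H) * (Q + H) / (P + Q) :=
    Real.sq_sqrt (by positivity)
  have hs2sq : s2 ^ 2 = Q ^ 2 * (P - H) / ((Q + H) * (P + Q)) := by
    rw [hs2def, mul_pow, hsq2]; field_simp
  have hdiffsq : s1 ^ 2 - s2 ^ 2 = Q * H / (Q + H) := by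
    rw [hs1sq, hs2sq]; field_simp; ring
  have hs2le : s2 ≤ s1 := by
    have h1 : s2 ^ 2 ≤ s1 ^ 2 := by
      have : 0 ≤ Q * H / (Q + H) := by positivity
      linarith
    have h2 := Real.sqrt_le_sqrt h1
    rwa [Real.sqrt_sq hs2nonneg, Real.sqrt_sq hs1pos.le] at h2
  have h1 : s1 - s2 = Q * H / (Q + H) / (s1 + s2) := by
    rw [eq_div_iff (by positivity : s1 + s2 ≠ 0)]
    linear_combination hdiffsq
  have key1 : Q * H / (Q + H) / (2 * s1) ≤ s1 - s2 := by
    rw [h1]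
    gcongr <;> first | positivity | linarith
  have h6 : (0:ℝ) < Real.sqrt 6 := Real.sqrt_pos.2 (by norm_num)
  have key2 : 2 / (3 * Real.sqrt 6) * H / Real.sqrt (min P Q) ≤ Q * H / (Q + H) / (2 * s1) := by
    have h2s1 : 2 * s1 ≤ Real.sqrt 6 * Real.sqrt (min P Q) := by
      have e1 : 2 * s1 = Real.sqrt (4 * (P * Q / (P + Q))) := by
        rw [show (4 : ℝ) * (P * Q / (P + Q)) = 2 ^ 2 * (P * Q / (P + Q)) by norm_num,
          Real.sqrt_mul (by positivity), Real.sqrt_sq (by norm_num : (0:ℝ) ≤ 2)]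
      have e2 : Real.sqrt 6 * Real.sqrt (min P Q) = Real.sqrt (6 * min P Q) :=
        (Real.sqrt_mul (by norm_num) _).symm
      rw [e1, e2]
      apply Real.sqrt_le_sqrt
      have hPQle : P * Q ≤ min P Q * (P + Q) := by
        rcases le_total P Q with h | h
        · rw [min_eq_left h]; nlinarith
        · rw [min_eq_right h]; nlinarith
      rw [show (4:ℝ) * (P * Q / (P + Q)) = 4 * (P * Q) / (P + Q) by ring,
        div_le_iff₀ hN]
      nlinarith
    have hc' : 2 * (2 * (Q + H) * s1) ≤ 3 * Real.sqrt 6 * (Q * Real.sqrt (min P Q)) := by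
      have hA : 2 * (Q + H) ≤ 3 * Q := by linarith
      have h4 : (2 * (Q + H)) * (2 * s1) ≤ (3 * Q) * (Real.sqrt 6 * Real.sqrt (min P Q)) :=
        mul_le_mul hA h2s1 (by positivity) (by positivity)
      ring_nf at h4 ⊢
      linarith
    rw [div_div, div_le_div_iff₀ (by positivity) (by positivity), div_mul_eq_mul_div,
      div_mul_eq_mul_div, div_le_iff₀ (by positivity : (0:ℝ) < 3 * Real.sqrt 6)]
    have h3 := mul_le_mul_of_nonneg_left hc' hH
    ring_nf at h3 ⊢
    linarith
  linarith

lemma sum_zero_aux (f : ℕ → ℝ) (l b θ : ℕ) (hbθ : b ≤ θ)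
    (hf1 : ∀ t, l < t → t ≤ θ → f t = 0) :
    ∑ t ∈ Finset.Icc (l + 1) b, f t = 0 :=
  Finset.sum_eq_zero fun t ht => by
    rw [Finset.mem_Icc] at ht; exact hf1 t (by omega) (by omega)

lemma sum_d_aux (f : ℕ → ℝ) (θ b r : ℕ) (d : ℝ) (hθb : θ ≤ b) (hbr : b ≤ r)
    (hf2 : ∀ t, θ < t → t ≤ r → f t = d) :
    ∑ t ∈ Finset.Icc (b + 1) r, f t = ((r : ℝ) - b) * d := by
  have h1 : ∀ t ∈ Finset.Icc (b + 1) r, f t = d := fun t ht => by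
    rw [Finset.mem_Icc] at ht; exact hf2 t (by omega) (by omega)
  rw [Finset.sum_congr rfl h1, Finset.sum_const, Finset.Icc_add_one_left_eq_Ioc, Nat.card_Ioc,
    nsmul_eq_mul, Nat.cast_sub hbr]

lemma sum_split_aux (f : ℕ → ℝ) (l θ b : ℕ) (d : ℝ) (hlθ : l ≤ θ) (hθb : θ ≤ b)
    (hf1 : ∀ t, l < t → t ≤ θ → f t = 0)
    (hf2 : ∀ t, θ < t → t ≤ b → f t = d) :
    ∑ t ∈ Finset.Icc (l + 1) b, f t = ((b : ℝ) - θ) * d := by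
  rw [Finset.Icc_add_one_left_eq_Ioc, ← Finset.sum_Ioc_consecutive f hlθ hθb]
  have h1 : ∑ t ∈ Finset.Ioc l θ, f t = 0 :=
    Finset.sum_eq_zero fun t ht => by
      rw [Finset.mem_Ioc] at ht; exact hf1 t ht.1 ht.2
  have h2 : ∑ t ∈ Finset.Ioc θ b, f t = ((b : ℝ) - θ) * d := by
    have h3 : ∀ t ∈ Finset.Ioc θ b, f t = d := fun t ht => by
      rw [Finset.mem_Ioc] at ht; exact hf2 t ht.1 ht.2
    rw [Finset.sum_congr rfl h3, Finset.sum_const, Nat.card_Ioc, nsmul_eq_mul,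
      Nat.cast_sub hθb]
  rw [h1, h2, zero_add]

theorem stmt_18 (l θ r : ℕ) (hlθ : l < θ) (hθr : θ < r)
    (hsep : ((r : ℝ) - l) / 4 ≤ min ((θ : ℝ) - l) ((r : ℝ) - θ))
    (d : ℝ) (f : ℕ → ℝ)
    (hf1 : ∀ t, l < t → t ≤ θ → f t = 0)
    (hf2 : ∀ t, θ < t → t ≤ r → f t = d)
    (b : ℕ) (hlb : l < b) (hbr : b < r)
    (hb : |(b : ℝ) - θ| ≤ min ((θ : ℝ) - l) ((r : ℝ) - θ) / 2) :
    2 / (3 * Real.sqrt 6) * |d| * |(b : ℝ) - θ| /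
        Real.sqrt (min ((θ : ℝ) - l) ((r : ℝ) - θ)) ≤
      |cusum f l θ r - cusum f l b r| := by
  have hP : (0:ℝ) < (θ:ℝ) - l := by
    have : (l:ℝ) < θ := by exact_mod_cast hlθ
    linarith
  have hQ : (0:ℝ) < (r:ℝ) - θ := by
    have : (θ:ℝ) < r := by exact_mod_cast hθr
    linarith
  have hQ0 : ((r:ℝ) - θ) ≠ 0 := ne_of_gt hQ
  have e1 : cusum f l θ r =
      -(d * Real.sqrt (((θ:ℝ) - l) * ((r:ℝ) - θ) / (((θ:ℝ) - l) + ((r:ℝ) - θ)))) := by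
    unfold cusum
    rw [sum_zero_aux f l θ θ le_rfl hf1, sum_d_aux f θ θ r d le_rfl hθr.le hf2,
      show ((r:ℝ) - l) = ((θ:ℝ) - l) + ((r:ℝ) - θ) by ring]
    have hfac : (0:ℝ) / ((θ:ℝ) - l) - ((r:ℝ) - θ) * d / ((r:ℝ) - θ) = -d := by
      field_simp
      ring
    rw [hfac]; ring
  rcases le_or_gt b θ with hbθ | hθb
  · -- b ≤ θ
    have hH : (0:ℝ) ≤ (θ:ℝ) - b := by
      have : (b:ℝ) ≤ θ := by exact_mod_cast hbθ
      linarith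
    have hHP : (θ:ℝ) - b < (θ:ℝ) - l := by
      have : (l:ℝ) < b := by exact_mod_cast hlb
      linarith
    have habs : |(b:ℝ) - θ| = (θ:ℝ) - b := by
      rw [abs_sub_comm, abs_of_nonneg hH]
    have hH2 : (θ:ℝ) - b ≤ min ((θ:ℝ) - l) ((r:ℝ) - θ) / 2 := habs ▸ hb
    have key := cusum_key ((θ:ℝ) - l) ((r:ℝ) - θ) ((θ:ℝ) - b) hP hQ hH hHP hH2
    have hQH : (0:ℝ) < ((r:ℝ) - θ) + ((θ:ℝ) - b) := by linarith
    have e2 : cusum f l b r =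
        -(d * (((r:ℝ) - θ) / (((r:ℝ) - θ) + ((θ:ℝ) - b)) *
          Real.sqrt ((((θ:ℝ) - l) - ((θ:ℝ) - b)) * (((r:ℝ) - θ) + ((θ:ℝ) - b)) /
            (((θ:ℝ) - l) + ((r:ℝ) - θ))))) := by
      unfold cusum
      rw [sum_zero_aux f l b θ hbθ hf1,
        sum_split_aux f b θ r d hbθ hθr.le (fun t ht1 ht2 => hf1 t (lt_trans hlb ht1) ht2) hf2,
        show ((b:ℝ) - l) * ((r:ℝ) - b) / ((r:ℝ) - l) =
          (((θ:ℝ) - l) - ((θ:ℝ) - b)) * (((r:ℝ) - θ) + ((θ:ℝ) - b)) /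
            (((θ:ℝ) - l) + ((r:ℝ) - θ)) by ring,
        zero_div, zero_sub, show ((r:ℝ) - b) = ((r:ℝ) - θ) + ((θ:ℝ) - b) by ring]
      ring
    rw [e1, e2, show -(d * Real.sqrt (((θ:ℝ) - l) * ((r:ℝ) - θ) / (((θ:ℝ) - l) + ((r:ℝ) - θ)))) -
        -(d * (((r:ℝ) - θ) / (((r:ℝ) - θ) + ((θ:ℝ) - b)) *
          Real.sqrt ((((θ:ℝ) - l) - ((θ:ℝ) - b)) * (((r:ℝ) - θ) + ((θ:ℝ) - b)) /
            (((θ:ℝ) - l) + ((r:ℝ) - θ))))) =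
        -(d * (Real.sqrt (((θ:ℝ) - l) * ((r:ℝ) - θ) / (((θ:ℝ) - l) + ((r:ℝ) - θ))) -
          ((r:ℝ) - θ) / (((r:ℝ) - θ) + ((θ:ℝ) - b)) *
          Real.sqrt ((((θ:ℝ) - l) - ((θ:ℝ) - b)) * (((r:ℝ) - θ) + ((θ:ℝ) - b)) /
            (((θ:ℝ) - l) + ((r:ℝ) - θ))))) by ring,
      abs_neg, abs_mul, habs]
    have hnn := le_trans (by positivity) key
    rw [abs_of_nonneg hnn]
    calc 2 / (3 * Real.sqrt 6) * |d| * ((θ:ℝ) - b) /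
          Real.sqrt (min ((θ:ℝ) - l) ((r:ℝ) - θ)) =
        |d| * (2 / (3 * Real.sqrt 6) * ((θ:ℝ) - b) /
          Real.sqrt (min ((θ:ℝ) - l) ((r:ℝ) - θ))) := by ring
      _ ≤ _ := mul_le_mul_of_nonneg_left key (abs_nonneg d)
  · -- θ < b
    have hθb' : θ ≤ b := hθb.le
    have hH : (0:ℝ) ≤ (b:ℝ) - θ := by
      have : (θ:ℝ) ≤ b := by exact_mod_cast hθb'
      linarith
    have hHP : (b:ℝ) - θ < (r:ℝ) - θ := by
      have : (b:ℝ) < r := by exact_mod_cast hbr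
      linarith
    have habs : |(b:ℝ) - θ| = (b:ℝ) - θ := abs_of_nonneg hH
    have hH2 : (b:ℝ) - θ ≤ min ((r:ℝ) - θ) ((θ:ℝ) - l) / 2 := by
      rw [min_comm]; exact habs ▸ hb
    have key := cusum_key ((r:ℝ) - θ) ((θ:ℝ) - l) ((b:ℝ) - θ) hQ hP hH hHP hH2
    rw [min_comm] at key
    have hPH : (0:ℝ) < ((θ:ℝ) - l) + ((b:ℝ) - θ) := by linarith
    have e1' : cusum f l θ r =
        -(d * Real.sqrt (((r:ℝ) - θ) * ((θ:ℝ) - l) / (((r:ℝ) - θ) + ((θ:ℝ) - l)))) := by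
      rw [e1, show ((θ:ℝ) - l) * ((r:ℝ) - θ) / (((θ:ℝ) - l) + ((r:ℝ) - θ)) =
        ((r:ℝ) - θ) * ((θ:ℝ) - l) / (((r:ℝ) - θ) + ((θ:ℝ) - l)) by ring]
    have e2 : cusum f l b r =
        -(d * (((θ:ℝ) - l) / (((θ:ℝ) - l) + ((b:ℝ) - θ)) *
          Real.sqrt ((((r:ℝ) - θ) - ((b:ℝ) - θ)) * (((θ:ℝ) - l) + ((b:ℝ) - θ)) /
            (((r:ℝ) - θ) + ((θ:ℝ) - l))))) := by
      unfold cusum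
      rw [sum_split_aux f l θ b d hlθ.le hθb' hf1
          (fun t ht1 ht2 => hf2 t ht1 (le_trans ht2 hbr.le)),
        sum_d_aux f θ b r d hθb' hbr.le hf2,
        show ((b:ℝ) - l) * ((r:ℝ) - b) / ((r:ℝ) - l) =
          (((r:ℝ) - θ) - ((b:ℝ) - θ)) * (((θ:ℝ) - l) + ((b:ℝ) - θ)) /
            (((r:ℝ) - θ) + ((θ:ℝ) - l)) by ring]
      have hfac : ((b:ℝ) - θ) * d / ((b:ℝ) - l) - ((r:ℝ) - b) * d / ((r:ℝ) - b) =
          -(d * (((θ:ℝ) - l) / (((θ:ℝ) - l) + ((b:ℝ) - θ)))) := by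
        have h2 : ((r:ℝ) - b) ≠ 0 := by
          have : (b:ℝ) < r := by exact_mod_cast hbr
          intro h; linarith [sub_eq_zero.mp h]
        have h3 : ((θ:ℝ) - l) + ((b:ℝ) - θ) = ((b:ℝ) - l) := by ring
        have h1 : ((b:ℝ) - l) ≠ 0 := by rw [← h3]; exact ne_of_gt hPH
        rw [h3]
        field_simp
        ring
      rw [hfac]
      ring
    rw [e1', e2, show -(d * Real.sqrt (((r:ℝ) - θ) * ((θ:ℝ) - l) / (((r:ℝ) - θ) + ((θ:ℝ) - l)))) -
        -(d * (((θ:ℝ) - l) / (((θ:ℝ) - l) + ((b:ℝ) - θ)) *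
          Real.sqrt ((((r:ℝ) - θ) - ((b:ℝ) - θ)) * (((θ:ℝ) - l) + ((b:ℝ) - θ)) /
            (((r:ℝ) - θ) + ((θ:ℝ) - l))))) =
        -(d * (Real.sqrt (((r:ℝ) - θ) * ((θ:ℝ) - l) / (((r:ℝ) - θ) + ((θ:ℝ) - l))) -
          ((θ:ℝ) - l) / (((θ:ℝ) - l) + ((b:ℝ) - θ)) *
          Real.sqrt ((((r:ℝ) - θ) - ((b:ℝ) - θ)) * (((θ:ℝ) - l) + ((b:ℝ) - θ)) /
            (((r:ℝ) - θ) + ((θ:ℝ) - l))))) by ring,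
      abs_neg, abs_mul, habs]
    have hnn := le_trans (by positivity) key
    rw [abs_of_nonneg hnn]
    calc 2 / (3 * Real.sqrt 6) * |d| * ((b:ℝ) - θ) /
          Real.sqrt (min ((θ:ℝ) - l) ((r:ℝ) - θ)) =
        |d| * (2 / (3 * Real.sqrt 6) * ((b:ℝ) - θ) /
          Real.sqrt (min ((θ:ℝ) - l) ((r:ℝ) - θ))) := by ring
      _ ≤ _ := mul_le_mul_of_nonneg_left key (abs_nonneg d)
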